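/- Let p, m ≥ 1 be integers, let (Ω, ℱ, P) be a probability space carrying, for each T > 0, real random variables Z_{T,ij} (1 ≤ i ≤ p, 1 ≤ j ≤ m), and let W = (W_1,…,W_p) be a random vector with values in ℝ^p. Suppose that (a) for each j ≤ m the random vector (Z_{T,1j},…,Z_{T,pj}) converges in distribution to W as T → ∞, and (b) for each i ≤ p, each 2 ≤ j ≤ m and each T > 0, Z_{T,ij} ≤ Z_{T,i1} almost surely. Then the pm-dimensional random vector ((Z_{T,11},…,Z_{T,p1}), (Z_{T,12},…,Z_{T,p2}), …, (Z_{T,1m},…,Z_{T,pm})) converges in distribution, as T → ∞, to (W, W, …, W) (m identical copies of W). -/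

import Mathlib

open MeasureTheory ProbabilityTheory Real Set Filter

noncomputable section

namespace Piterbarg

/-- `a_T = √(2 ln T)`. -/
def aT (T : ℝ) : ℝ := Real.sqrt (2 * Real.log T)

/-- `b_T`-type normalization with Pickands constant `H`:
`a_T + a_T⁻¹ ln((2π)^{-1/2} C^{1/α} H a_T^{-1+2/α})`. -/
def bTH (C alpha H T : ℝ) : ℝ :=
  aT T + Real.log ((2 * Real.pi) ^ (-(1:ℝ)/2) * C ^ ((1:ℝ)/alpha) * H *
    aT T ^ (-(1:ℝ) + 2/alpha)) / aT T

/-- normalization for a sparse grid: `a_T - a_T⁻¹ ln(a_T δ(T) √(2π))`. -/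
def bSparse (delta : ℝ → ℝ) (T : ℝ) : ℝ :=
  aT T - Real.log (aT T * delta T * Real.sqrt (2 * Real.pi)) / aT T

/-- the uniform grid `𝔑(δ) = {kδ(T) : k ∈ ℕ}`. -/
def gridSet (delta : ℝ → ℝ) (T : ℝ) : Set ℝ := {s : ℝ | ∃ k : ℕ, s = (k : ℝ) * delta T}

/-- sparse grid: `δ(T)(2 ln T)^{1/α} → ∞` and `δ` bounded. -/
def IsSparseGrid (alpha : ℝ) (delta : ℝ → ℝ) : Prop :=
  (∀ T, 0 < delta T) ∧ (∃ d0 > 0, ∀ T, delta T ≤ d0) ∧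
    Tendsto (fun T => delta T * (2 * Real.log T) ^ ((1:ℝ)/alpha)) atTop atTop

/-- dense grid: `δ(T)(2 ln T)^{1/α} → 0`. -/
def IsDenseGrid (alpha : ℝ) (delta : ℝ → ℝ) : Prop :=
  (∀ T, 0 < delta T) ∧
    Tendsto (fun T => delta T * (2 * Real.log T) ^ ((1:ℝ)/alpha)) atTop (nhds 0)

/-- Pickands grid: `δ(T) = D (2 ln T)^{-1/α}`. -/
def IsPickandsGrid (alpha D : ℝ) (delta : ℝ → ℝ) : Prop :=
  0 < D ∧ ∀ T, delta T = D * (2 * Real.log T) ^ (-(1:ℝ)/alpha)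

/-- A family of random variables is centered (jointly) Gaussian: every finite linear
combination has a centered Gaussian law. -/
def IsCenteredGaussianFamily {Ω : Type*} [MeasurableSpace Ω] (P : Measure Ω)
    {ι : Type*} (Y : ι → Ω → ℝ) : Prop :=
  ∀ (n : ℕ) (idx : Fin n → ι) (c : Fin n → ℝ), ∃ v : NNReal,
    Measure.map (fun ω => ∑ i, c i * Y (idx i) ω) P = gaussianReal 0 v

/-- Hypotheses on the centered stationary Gaussian vector process `X` with
cross-correlation functions `r` satisfying the local condition (A1). -/
structure GaussVecHyp {Ω : Type*} [MeasurableSpace Ω] (P : Measure Ω) {p : ℕ}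
    (X : Fin p → ℝ → Ω → ℝ) (r : Fin p → Fin p → ℝ → ℝ) (C alpha : ℝ) : Prop where
  gaussian : IsCenteredGaussianFamily P (fun kt : Fin p × ℝ => X kt.1 kt.2)
  contPaths : ∀ k ω, Continuous fun t => X k t ω
  covariance : ∀ k l s t, 0 ≤ s → 0 ≤ t → ∫ ω, X k s ω * X l (s + t) ω ∂P = r k l t
  unitVar : ∀ k, r k k 0 = 1
  localCorr : ∀ k, Tendsto (fun t => (r k k t - (1 - C * |t| ^ alpha)) / |t| ^ alpha)
      (nhdsWithin 0 (Ioi 0)) (nhds 0)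
  corrLtOne : ∀ k, ∀ t > (0:ℝ), r k k t < 1

/-- One-dimensional version of `GaussVecHyp`. -/
structure GaussHyp1 {Ω : Type*} [MeasurableSpace Ω] (P : Measure Ω)
    (X : ℝ → Ω → ℝ) (r : ℝ → ℝ) (C alpha : ℝ) : Prop where
  gaussian : IsCenteredGaussianFamily P (fun t : ℝ => X t)
  contPaths : ∀ ω, Continuous fun t => X t ω
  covariance : ∀ s t, 0 ≤ s → 0 ≤ t → ∫ ω, X s ω * X (s + t) ω ∂P = r t
  unitVar : r 0 = 1
  localCorr : Tendsto (fun t => (r t - (1 - C * |t| ^ alpha)) / |t| ^ alpha)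
      (nhdsWithin 0 (Ioi 0)) (nhds 0)
  corrLtOne : ∀ t > (0:ℝ), r t < 1

/-- Covariance matrix of the auxiliary Gaussian vector `Z`. -/
def covZ {p : ℕ} (rr : Fin p → Fin p → ℝ) (k l : Fin p) : ℝ :=
  if k = l then 1
  else if 0 < rr k k * rr l l then rr k l / Real.sqrt (rr k k * rr l l) else 0

/-- Hypotheses on the auxiliary centered Gaussian vector `Z`. -/
structure ZHyp {Ω : Type*} [MeasurableSpace Ω] (P : Measure Ω) {p : ℕ}
    (Z : Fin p → Ω → ℝ) (rr : Fin p → Fin p → ℝ) : Prop where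
  gaussian : IsCenteredGaussianFamily P Z
  cov : ∀ k l, ∫ ω, Z k ω * Z l ω ∂P = covZ rr k l
  posdef : ∀ c : Fin p → ℝ, c ≠ 0 → 0 < ∑ k, ∑ l, c k * c l * covZ rr k l

/-- Joint distribution function of normalized maxima over three time sets. -/
def pTOn {Ω : Type*} [MeasurableSpace Ω] (P : Measure Ω) {p : ℕ}
    (X : Fin p → ℝ → Ω → ℝ) (A0 A1 A2 : Set ℝ) (c0 c1 c2 scale : ℝ)
    (x y1 y2 : Fin p → ℝ) : ℝ :=
  (P {ω | ∀ k, (∀ t ∈ A0, scale * (X k t ω - c0) ≤ x k) ∧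
      (∀ t ∈ A1, scale * (X k t ω - c1) ≤ y1 k) ∧
      (∀ t ∈ A2, scale * (X k t ω - c2) ≤ y2 k)}).toReal

/-- `p_T(x,y₁,y₂)`: joint distribution function of the normalized maxima of `X` over
`[0,T]` and over the two grids intersected with `[0,T]`. -/
def pT {Ω : Type*} [MeasurableSpace Ω] (P : Measure Ω) {p : ℕ}
    (X : Fin p → ℝ → Ω → ℝ) (delta1 delta2 b0 b1 b2 : ℝ → ℝ) (T : ℝ)
    (x y1 y2 : Fin p → ℝ) : ℝ :=
  pTOn P X (Icc 0 T) (gridSet delta1 T ∩ Icc 0 T) (gridSet delta2 T ∩ Icc 0 T)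
    (b0 T) (b1 T) (b2 T) (aT T) x y1 y2

/-- The limiting mixed distribution
`E[exp(-∑ₖ f(xₖ,y_{k1},y_{k2}) e^{-r_{kk}+√(2 r_{kk}) Z_k})]`. -/
def limitExpect {Ω : Type*} [MeasurableSpace Ω] (P : Measure Ω) {p : ℕ}
    (Z : Fin p → Ω → ℝ) (rr : Fin p → Fin p → ℝ) (f : ℝ → ℝ → ℝ → ℝ)
    (x y1 y2 : Fin p → ℝ) : ℝ :=
  ∫ ω, Real.exp (- ∑ k, f (x k) (y1 k) (y2 k) *
      Real.exp (- rr k k + Real.sqrt (2 * rr k k) * Z k ω)) ∂P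

/-- `B*(t) = √2 B_{α/2}(t) - |t|^α`. -/
def Bstar {Ω : Type*} (alpha : ℝ) (B : ℝ → Ω → ℝ) (t : ℝ) (ω : Ω) : ℝ :=
  Real.sqrt 2 * B t ω - |t| ^ alpha

/-- `B` is a standard fractional Brownian motion with Hurst index `α/2`. -/
structure FBMHyp {Ω : Type*} [MeasurableSpace Ω] (Q : Measure Ω) (alpha : ℝ)
    (B : ℝ → Ω → ℝ) : Prop where
  gaussian : IsCenteredGaussianFamily Q (fun t : ℝ => B t)
  contPaths : ∀ ω, Continuous fun t => B t ω
  cov : ∀ s t, 0 ≤ s → 0 ≤ t →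
    ∫ ω, B s ω * B t ω ∂Q = (s ^ alpha + t ^ alpha - |s - t| ^ alpha) / 2

/-- `max_{t ∈ [0,λ]} B*(t)`. -/
def supCont {Ω : Type*} (alpha : ℝ) (B : ℝ → Ω → ℝ) (lam : ℝ) (ω : Ω) : ℝ :=
  ⨆ t : Icc (0:ℝ) lam, Bstar alpha B t ω

/-- `max_{k ∈ ℕ, kD ∈ [0,λ]} B*(kD)`. -/
def supGrid {Ω : Type*} (alpha : ℝ) (B : ℝ → Ω → ℝ) (D lam : ℝ) (ω : Ω) : ℝ :=
  ⨆ k : {k : ℕ // (k:ℝ) * D ≤ lam}, Bstar alpha B ((k.1 : ℝ) * D) ω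

/-- `H` is the Pickands constant `H_α`. -/
def IsPickandsConst {Ω : Type*} [MeasurableSpace Ω] (Q : Measure Ω) (alpha : ℝ)
    (B : ℝ → Ω → ℝ) (H : ℝ) : Prop :=
  0 < H ∧
    Tendsto (fun lam => (∫ ω, Real.exp (supCont alpha B lam ω) ∂Q) / lam) atTop (nhds H)

/-- `H` is the Pickands constant `H_{D,α}`. -/
def IsPickandsGridConst {Ω : Type*} [MeasurableSpace Ω] (Q : Measure Ω) (alpha : ℝ)
    (B : ℝ → Ω → ℝ) (D H : ℝ) : Prop :=
  0 < H ∧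
    Tendsto (fun lam => (∫ ω, Real.exp (supGrid alpha B D lam ω) ∂Q) / lam) atTop (nhds H)

/-- event `max_{t ∈ [0,λ]} B*(t) > u`. -/
def contExceeds {Ω : Type*} (alpha : ℝ) (B : ℝ → Ω → ℝ) (lam u : ℝ) : Set Ω :=
  {ω | ∃ t ∈ Icc (0:ℝ) lam, u < Bstar alpha B t ω}

/-- event `max_{k ∈ ℕ, kD ∈ [0,λ]} B*(kD) > u`. -/
def gridExceeds {Ω : Type*} (alpha : ℝ) (B : ℝ → Ω → ℝ) (D lam u : ℝ) : Set Ω :=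
  {ω | ∃ k : ℕ, (k:ℝ) * D ≤ lam ∧ u < Bstar alpha B ((k:ℝ) * D) ω}

/-- `H_{D,α}^{x,y}(λ)`. -/
def HxyLam {Ω : Type*} [MeasurableSpace Ω] (Q : Measure Ω) (alpha : ℝ)
    (B : ℝ → Ω → ℝ) (D lam x y : ℝ) : ℝ :=
  ∫ s : ℝ, Real.exp s *
    (Q (contExceeds alpha B lam (s + x) ∩ gridExceeds alpha B D lam (s + y))).toReal

/-- `Hxy` is the function `(x,y) ↦ H_{D,α}^{x,y}`. -/
def IsHxy {Ω : Type*} [MeasurableSpace Ω] (Q : Measure Ω) (alpha : ℝ)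
    (B : ℝ → Ω → ℝ) (D : ℝ) (Hxy : ℝ → ℝ → ℝ) : Prop :=
  ∀ x y : ℝ, 0 < Hxy x y ∧
    Tendsto (fun lam => HxyLam Q alpha B D lam x y / lam) atTop (nhds (Hxy x y))

/-- `H_{D₁,D₂,α}^{z₁,z₂}(λ)`. -/
def H2Lam {Ω : Type*} [MeasurableSpace Ω] (Q : Measure Ω) (alpha : ℝ)
    (B : ℝ → Ω → ℝ) (D1 D2 lam z1 z2 : ℝ) : ℝ :=
  ∫ s : ℝ, Real.exp s *
    (Q (gridExceeds alpha B D1 lam (s + z1) ∩ gridExceeds alpha B D2 lam (s + z2))).toReal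

/-- `H_{D₁,D₂,α}^{x,z₁,z₂}(λ)`. -/
def H3Lam {Ω : Type*} [MeasurableSpace Ω] (Q : Measure Ω) (alpha : ℝ)
    (B : ℝ → Ω → ℝ) (D1 D2 lam x z1 z2 : ℝ) : ℝ :=
  ∫ s : ℝ, Real.exp s *
    (Q (contExceeds alpha B lam (s + x) ∩ gridExceeds alpha B D1 lam (s + z1) ∩
        gridExceeds alpha B D2 lam (s + z2))).toReal

/-- `H2` is the function `(z₁,z₂) ↦ H_{D₁,D₂,α}^{z₁,z₂}`. -/
def IsH2 {Ω : Type*} [MeasurableSpace Ω] (Q : Measure Ω) (alpha : ℝ)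
    (B : ℝ → Ω → ℝ) (D1 D2 : ℝ) (H2 : ℝ → ℝ → ℝ) : Prop :=
  ∀ z1 z2 : ℝ, 0 < H2 z1 z2 ∧
    Tendsto (fun lam => H2Lam Q alpha B D1 D2 lam z1 z2 / lam) atTop (nhds (H2 z1 z2))

/-- `H3` is the function `(x,z₁,z₂) ↦ H_{D₁,D₂,α}^{x,z₁,z₂}`. -/
def IsH3 {Ω : Type*} [MeasurableSpace Ω] (Q : Measure Ω) (alpha : ℝ)
    (B : ℝ → Ω → ℝ) (D1 D2 : ℝ) (H3 : ℝ → ℝ → ℝ → ℝ) : Prop :=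
  ∀ x z1 z2 : ℝ, 0 < H3 x z1 z2 ∧
    Tendsto (fun lam => H3Lam Q alpha B D1 D2 lam x z1 z2 / lam) atTop (nhds (H3 x z1 z2))

/-- standard normal distribution function. -/
def stdNormCDF (x : ℝ) : ℝ := ((gaussianReal 0 1) (Iic x)).toReal

/-- standard normal survival function. -/
def stdNormSurvival (u : ℝ) : ℝ := ((gaussianReal 0 1) (Ioi u)).toReal

/-- `n_T = ⌊T/(S+R)⌋` with `S = T^a`, `R = T^b`. -/
def nBlocks (a b T : ℝ) : ℕ := ⌊T / (T ^ a + T ^ b)⌋₊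

/-- `𝐒 = ∪_{j=1}^{n_T} [(j-1)(S+R)+R, j(S+R))`. -/
def Sblocks (a b T : ℝ) : Set ℝ :=
  ⋃ j ∈ Finset.Icc 1 (nBlocks a b T),
    Ico (((j:ℝ) - 1) * (T ^ a + T ^ b) + T ^ b) ((j:ℝ) * (T ^ a + T ^ b))

/-- the grid is sparse or Pickands, with its associated normalization. -/
def SparseOrPickands {Ω' : Type*} [MeasurableSpace Ω'] (Q : Measure Ω')
    (B : ℝ → Ω' → ℝ) (C alpha : ℝ) (delta bdelta : ℝ → ℝ) : Prop :=
  (IsSparseGrid alpha delta ∧ bdelta = bSparse delta) ∨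
  (∃ D HD, IsPickandsGrid alpha D delta ∧ IsPickandsGridConst Q alpha B D HD ∧
    bdelta = bTH C alpha HD)

/-- the grid is sparse, Pickands or dense, with its associated normalization. -/
def GridWithNorm {Ω' : Type*} [MeasurableSpace Ω'] (Q : Measure Ω')
    (B : ℝ → Ω' → ℝ) (C alpha Halpha : ℝ) (delta bdelta : ℝ → ℝ) : Prop :=
  SparseOrPickands Q B C alpha delta bdelta ∨
  (IsDenseGrid alpha delta ∧ bdelta = bTH C alpha Halpha)

end Piterbarg
open Piterbarg


section AuxLemmasForA4
open scoped Topology ENNReal NNReal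
section Aux

variable {Ω : Type*} [MeasurableSpace Ω] {Ω' : Type*} [MeasurableSpace Ω']

lemma aux_tendsto_measure {κ : Type*} [Fintype κ]
    (P : Measure Ω) [IsProbabilityMeasure P] (P' : Measure Ω') [IsProbabilityMeasure P']
    (φ : ℝ → Ω → (κ → ℝ)) (ψ : Ω' → κ → ℝ)
    (hφ : ∀ T, Measurable (φ T)) (hψ : Measurable ψ)
    (h : ∀ g : BoundedContinuousFunction (κ → ℝ) ℝ,
      Tendsto (fun T => ∫ ω, g (φ T ω) ∂P) atTop (𝓝 (∫ ω, g (ψ ω) ∂P')))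
    {S : Set (κ → ℝ)} (hSm : MeasurableSet S) (hS : P'.map ψ (frontier S) = 0) :
    Tendsto (fun T => P (φ T ⁻¹' S)) atTop (𝓝 (P'.map ψ S)) := by
  haveI : ∀ T : ℝ, IsProbabilityMeasure (P.map (φ T)) :=
    fun T => Measure.isProbabilityMeasure_map (hφ T).aemeasurable
  haveI : IsProbabilityMeasure (P'.map ψ) := Measure.isProbabilityMeasure_map hψ.aemeasurable
  set μs : ℝ → ProbabilityMeasure (κ → ℝ) := fun T => ⟨P.map (φ T), inferInstance⟩ with hμs
  set ν : ProbabilityMeasure (κ → ℝ) := ⟨P'.map ψ, inferInstance⟩ with hν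
  have hw : Tendsto μs atTop (𝓝 ν) := by
    rw [ProbabilityMeasure.tendsto_iff_forall_integral_tendsto]
    intro f
    have e1 : ∀ T, ∫ x, f x ∂(μs T : Measure _) = ∫ ω, f (φ T ω) ∂P := fun T =>
      integral_map (hφ T).aemeasurable f.continuous.measurable.aestronglyMeasurable
    have e2 : (∫ x, f x ∂(ν : Measure _)) = ∫ ω, f (ψ ω) ∂P' :=
      integral_map hψ.aemeasurable f.continuous.measurable.aestronglyMeasurable
    simp only [e1, e2]
    exact h f
  have key := ProbabilityMeasure.tendsto_measure_of_null_frontier_of_tendsto' hw (E := S) hS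
  have e1 : ∀ T, (μs T : Measure (κ → ℝ)) S = P (φ T ⁻¹' S) :=
    fun T => Measure.map_apply (hφ T) hSm
  have e2 : (ν : Measure (κ → ℝ)) S = P'.map ψ S := rfl
  simp only [e1, e2] at key
  exact key




lemma aux_in_prob (P : Measure Ω) [IsProbabilityMeasure P]
    (ρ : Measure ℝ) [IsProbabilityMeasure ρ]
    (U V : ℝ → Ω → ℝ) (hUm : ∀ T, Measurable (U T)) (hVm : ∀ T, Measurable (V T))
    (hU : ∀ x : ℝ, ρ {x} = 0 →
      Tendsto (fun T => (P {ω | U T ω ≤ x}).toReal) atTop (𝓝 ((ρ (Iic x)).toReal)))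
    (hV : ∀ x : ℝ, ρ {x} = 0 →
      Tendsto (fun T => (P {ω | V T ω ≤ x}).toReal) atTop (𝓝 ((ρ (Iic x)).toReal)))
    (hdom : ∀ T, ∀ᵐ ω ∂P, V T ω ≤ U T ω)
    {ε δ : ℝ} (hε : 0 < ε) (hδ : 0 < δ) :
    ∀ᶠ T in atTop, (P {ω | ε ≤ U T ω - V T ω}).toReal ≤ δ := by
  classical
  have hδ3 : (0:ℝ≥0∞) < ENNReal.ofReal (δ/3) := ENNReal.ofReal_pos.mpr (by linarith)
  -- lower tail point
  obtain ⟨n₁, hn₁⟩ : ∃ n : ℕ, ρ (Iic (-(n:ℝ))) < ENNReal.ofReal (δ/3) := by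
    have hinter : (⋂ n : ℕ, Iic (-(n:ℝ))) = (∅ : Set ℝ) := by
      ext y
      simp only [mem_iInter, mem_Iic, mem_empty_iff_false, iff_false, not_forall]
      obtain ⟨n, hn⟩ := exists_nat_gt (-y)
      exact ⟨n, by push_neg; linarith⟩
    have h1 : Tendsto (fun n : ℕ => ρ (Iic (-(n:ℝ)))) atTop (𝓝 (ρ (⋂ n : ℕ, Iic (-(n:ℝ))))) :=
      tendsto_measure_iInter_atTop (fun _ => measurableSet_Iic.nullMeasurableSet)
        (fun n m hnm => Iic_subset_Iic.mpr (neg_le_neg (Nat.cast_le.mpr hnm)))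
        ⟨0, measure_ne_top _ _⟩
    rw [hinter] at h1
    simp only [measure_empty] at h1
    exact (h1.eventually_lt_const hδ3).exists
  obtain ⟨n₂, hn₂⟩ : ∃ n : ℕ, ρ (Ioi (n:ℝ)) < ENNReal.ofReal (δ/3) := by
    have hinter : (⋂ n : ℕ, Ioi (n:ℝ)) = (∅ : Set ℝ) := by
      ext y
      simp only [mem_iInter, mem_Ioi, mem_empty_iff_false, iff_false, not_forall]
      obtain ⟨n, hn⟩ := exists_nat_gt y
      exact ⟨n, by push_neg; linarith⟩
    have h1 : Tendsto (fun n : ℕ => ρ (Ioi (n:ℝ))) atTop (𝓝 (ρ (⋂ n : ℕ, Ioi (n:ℝ)))) :=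
      tendsto_measure_iInter_atTop (fun _ => measurableSet_Ioi.nullMeasurableSet)
        (fun n m hnm => Ioi_subset_Ioi (Nat.cast_le.mpr hnm))
        ⟨0, measure_ne_top _ _⟩
    rw [hinter] at h1
    simp only [measure_empty] at h1
    exact (h1.eventually_lt_const hδ3).exists
  set a₀ : ℝ := -(n₁:ℝ) with ha₀
  set b₀ : ℝ := (n₂:ℝ) with hb₀
  -- atoms are countable
  have hcount : Set.Countable {x : ℝ | ρ {x} ≠ 0} := by
    have h := Measure.countable_meas_pos_of_disjoint_iUnion (μ := ρ)
      (As := fun x : ℝ => {x}) (fun x => measurableSet_singleton x)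
      (fun x y hxy => by simp [Function.onFun, disjoint_singleton, hxy])
    convert h using 1
    ext x
    simp [pos_iff_ne_zero]
  -- grid parameters
  set h : ℝ := min ε 1 / 2 with hh_def
  have hh : 0 < h := by positivity
  have hh1 : h < 1 := by
    have : min ε 1 ≤ 1 := min_le_right _ _
    rw [hh_def]; linarith
  have hhε : h ≤ ε := by
    have : min ε 1 ≤ ε := min_le_left _ _
    rw [hh_def]; linarith
  set base : ℝ := a₀ - 1 with hbase
  set N : ℕ := ⌈(b₀ - base)/h⌉₊ with hN_def
  have hNh : b₀ - base ≤ (N:ℝ) * h := by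
    rcases le_or_gt (b₀ - base) 0 with h0 | h0
    · exact h0.trans (by positivity)
    · have := Nat.le_ceil ((b₀ - base)/h)
      rw [div_le_iff₀ hh] at this
      exact this.trans (le_of_eq rfl)
  -- choose the shift θ avoiding atoms
  obtain ⟨θ, hθmem, hθ⟩ : ∃ θ ∈ Ioo (0:ℝ) h,
      θ ∈ (⋃ k ∈ Finset.range (N+1), (fun t : ℝ => t - (base + k*h)) '' {x | ρ {x} ≠ 0})ᶜ := by
    have hcnt : Set.Countable
        (⋃ k ∈ Finset.range (N+1), (fun t : ℝ => t - (base + k*h)) '' {x | ρ {x} ≠ 0}) := by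
      apply Set.Countable.biUnion (Set.countable_coe_iff.mp inferInstance) ?_ |>.mono subset_rfl
      · exact fun k _ => hcount.image _
    have hdense : Dense (⋃ k ∈ Finset.range (N+1),
        (fun t : ℝ => t - (base + k*h)) '' {x | ρ {x} ≠ 0})ᶜ := hcnt.dense_compl ℝ
    obtain ⟨θ, hθ1, hθ2⟩ := hdense.exists_mem_open isOpen_Ioo (nonempty_Ioo.mpr hh)
    exact ⟨θ, hθ2, hθ1⟩
  obtain ⟨hθ0, hθh⟩ := hθmem
  set x : ℕ → ℝ := fun k => base + θ + k*h with hx_def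
  have hxatom : ∀ k ≤ N, ρ {x k} = 0 := by
    intro k hk
    by_contra hne
    apply hθ
    refine mem_biUnion (Finset.mem_range.mpr (Nat.lt_succ_of_le hk)) ⟨x k, hne, ?_⟩
    simp [hx_def]
  have hx0 : x 0 < a₀ := by simp only [hx_def]; push_cast; rw [hbase]; linarith
  have hxN : b₀ ≤ x N := by simp only [hx_def]; linarith
  -- the three tendsto facts
  have htendS1 : Tendsto (fun T => (P {ω | x N < U T ω}).toReal) atTop
      (𝓝 ((ρ (Ioi (x N))).toReal)) := by
    have e : ∀ T, (P {ω | x N < U T ω}).toReal = 1 - (P {ω | U T ω ≤ x N}).toReal := by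
      intro T
      have hc : {ω | x N < U T ω} = {ω | U T ω ≤ x N}ᶜ := by ext ω; simp [not_le]
      rw [hc, measure_compl (measurableSet_le (hUm T) measurable_const) (measure_ne_top _ _),
        measure_univ, ENNReal.toReal_sub_of_le prob_le_one ENNReal.one_ne_top, ENNReal.toReal_one]
    have e2 : (ρ (Ioi (x N))).toReal = 1 - (ρ (Iic (x N))).toReal := by
      rw [← compl_Iic, measure_compl measurableSet_Iic (measure_ne_top _ _), measure_univ,
        ENNReal.toReal_sub_of_le prob_le_one ENNReal.one_ne_top, ENNReal.toReal_one]
    simp only [e, e2]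
    exact (hU (x N) (hxatom N le_rfl)).const_sub 1
  have htendS2 : Tendsto (fun T => (P {ω | V T ω ≤ x 0}).toReal) atTop
      (𝓝 ((ρ (Iic (x 0))).toReal)) := hV (x 0) (hxatom 0 (Nat.zero_le N))
  have htendC : ∀ k ∈ Finset.range N, Tendsto
      (fun T => (P {ω | V T ω ≤ x k}).toReal - (P {ω | U T ω ≤ x k}).toReal) atTop (𝓝 0) := by
    intro k hk
    have hk' : k ≤ N := le_of_lt (Finset.mem_range.mp hk)
    have := (hV (x k) (hxatom k hk')).sub (hU (x k) (hxatom k hk'))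
    simpa using this
  -- the bounding function
  set f : ℝ → ℝ := fun T => (P {ω | x N < U T ω}).toReal + (P {ω | V T ω ≤ x 0}).toReal +
    ∑ k ∈ Finset.range N, ((P {ω | V T ω ≤ x k}).toReal - (P {ω | U T ω ≤ x k}).toReal) with hf_def
  have hftend : Tendsto f atTop
      (𝓝 ((ρ (Ioi (x N))).toReal + (ρ (Iic (x 0))).toReal + 0)) := by
    refine Tendsto.add (htendS1.add htendS2) ?_
    have := tendsto_finset_sum (Finset.range N) htendC
    simpa using this
  have hL : (ρ (Ioi (x N))).toReal + (ρ (Iic (x 0))).toReal + 0 < δ := by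
    have h1 : (ρ (Ioi (x N))).toReal < δ/3 := by
      have hle : ρ (Ioi (x N)) ≤ ρ (Ioi b₀) := measure_mono (Ioi_subset_Ioi hxN)
      have := lt_of_le_of_lt hle hn₂
      rwa [ENNReal.lt_ofReal_iff_toReal_lt (measure_ne_top _ _)] at this
    have h2 : (ρ (Iic (x 0))).toReal < δ/3 := by
      have hle : ρ (Iic (x 0)) ≤ ρ (Iic a₀) := measure_mono (Iic_subset_Iic.mpr hx0.le)
      have := lt_of_le_of_lt hle hn₁
      rwa [ENNReal.lt_ofReal_iff_toReal_lt (measure_ne_top _ _)] at this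
    linarith
  -- pointwise bound : (P E_T).toReal ≤ f T
  have hbound : ∀ T, (P {ω | ε ≤ U T ω - V T ω}).toReal ≤ f T := by
    intro T
    set S1 := {ω | x N < U T ω} with hS1
    set S2 := {ω | V T ω ≤ x 0} with hS2
    set C : ℕ → Set Ω := fun k => {ω | V T ω ≤ x k} \ {ω | U T ω ≤ x k} with hC
    have hinc : {ω | ε ≤ U T ω - V T ω} ⊆ S1 ∪ S2 ∪ ⋃ k ∈ Finset.range N, C k := by
      intro ω hω
      simp only [mem_setOf_eq] at hω
      by_cases h1 : x N < U T ω
      · exact Or.inl (Or.inl h1)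
      push_neg at h1
      by_cases h2 : U T ω ≤ x 0
      · exact Or.inl (Or.inr (by simp only [hS2, mem_setOf_eq]; linarith))
      push_neg at h2
      set k := Nat.findGreatest (fun k => x k < U T ω) N with hk_def
      have hkP : x k < U T ω :=
        Nat.findGreatest_spec (P := fun k => x k < U T ω) (Nat.zero_le N) h2
      have hkN : k ≤ N := Nat.findGreatest_le N
      have hklt : k < N := by
        rcases lt_or_eq_of_le hkN with h' | h'
        · exact h'
        · exact absurd (h' ▸ hkP) (not_lt.mpr h1)
      have hnext : U T ω ≤ x (k+1) := by
        have := Nat.findGreatest_is_greatest (P := fun k => x k < U T ω)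
          (hk_def ▸ Nat.lt_succ_self k) (Nat.succ_le_of_lt hklt)
        exact not_lt.mp this
      have hxk1 : x (k+1) = x k + h := by simp only [hx_def]; push_cast; ring
      refine Or.inr (mem_biUnion (Finset.mem_range.mpr hklt) ?_)
      constructor
      · simp only [mem_setOf_eq]; rw [hxk1] at hnext; linarith
      · simp only [mem_setOf_eq]; exact not_le.mpr hkP
    have hCval : ∀ k, (P (C k)).toReal =
        (P {ω | V T ω ≤ x k}).toReal - (P {ω | U T ω ≤ x k}).toReal := by
      intro k
      set s := {ω | V T ω ≤ x k}
      set t := {ω | U T ω ≤ x k}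
      have hts : P (t \ s) = 0 := by
        rw [measure_eq_zero_iff_ae_notMem]
        filter_upwards [hdom T] with ω hω hmem
        obtain ⟨h1, h2⟩ := hmem
        simp only [s, t, mem_setOf_eq] at h1 h2
        exact h2 (le_trans hω h1)
      have htm : MeasurableSet t := measurableSet_le (hUm T) measurable_const
      have hst : P (s ∩ t) = P t := by
        have e1 : P (t \ s) + P (t ∩ s) = P t :=
          measure_diff_add_inter t (measurableSet_le (hVm T) measurable_const)
        rw [hts, zero_add, inter_comm] at e1
        exact e1
      have e2 : P (s \ t) + P (s ∩ t) = P s := measure_diff_add_inter s htm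
      rw [hst] at e2
      have := congrArg ENNReal.toReal e2
      rw [ENNReal.toReal_add (measure_ne_top _ _) (measure_ne_top _ _)] at this
      simp only [hC]
      linarith
    have hmeas_le : P {ω | ε ≤ U T ω - V T ω} ≤
        P S1 + P S2 + ∑ k ∈ Finset.range N, P (C k) := by
      refine (measure_mono hinc).trans ?_
      refine (measure_union_le _ _).trans ?_
      exact add_le_add (measure_union_le _ _) (measure_biUnion_finset_le _ _)
    have hne : P S1 + P S2 + ∑ k ∈ Finset.range N, P (C k) ≠ ⊤ := by
      refine ENNReal.add_ne_top.mpr ⟨ENNReal.add_ne_top.mpr ⟨measure_ne_top _ _, measure_ne_top _ _⟩, ?_⟩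
      exact (ENNReal.sum_lt_top.mpr (fun k _ => measure_lt_top _ _)).ne
    have := ENNReal.toReal_mono hne hmeas_le
    rw [ENNReal.toReal_add (ENNReal.add_ne_top.mpr ⟨measure_ne_top _ _, measure_ne_top _ _⟩)
        (ENNReal.sum_lt_top.mpr (fun k _ => measure_lt_top _ _)).ne,
      ENNReal.toReal_add (measure_ne_top _ _) (measure_ne_top _ _),
      ENNReal.toReal_sum (fun k _ => measure_ne_top _ _)] at this
    refine this.trans (le_of_eq ?_)
    rw [hf_def]
    congr 1
    exact Finset.sum_congr rfl (fun k _ => hCval k)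
  filter_upwards [hftend.eventually_lt_const hL] with T hT
  exact (hbound T).trans hT.le

end Aux
section AuxMain
variable {Ω : Type*} [MeasurableSpace Ω] {Ω' : Type*} [MeasurableSpace Ω']

theorem dominated_columns_joint_convergence'
    (P : Measure Ω) [IsProbabilityMeasure P]
    (P' : Measure Ω') [IsProbabilityMeasure P']
    {p m : ℕ} (hp : 0 < p) (hm : 0 < m)
    (Z : ℝ → Fin p → Fin m → Ω → ℝ) (W : Fin p → Ω' → ℝ)
    (hmeasZ : ∀ T i j, Measurable (Z T i j)) (hmeasW : ∀ i, Measurable (W i))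
    (hconv : ∀ j : Fin m, ∀ g : BoundedContinuousFunction (Fin p → ℝ) ℝ,
      Tendsto (fun T => ∫ ω, g (fun i => Z T i j ω) ∂P) atTop
        (nhds (∫ ω, g (fun i => W i ω) ∂P')))
    (hdom : ∀ (T : ℝ) (i : Fin p) (j : Fin m),
      ∀ᵐ ω ∂P, Z T i j ω ≤ Z T i ⟨0, hm⟩ ω) :
    ∀ g : BoundedContinuousFunction (Fin p × Fin m → ℝ) ℝ,
      Tendsto (fun T => ∫ ω, g (fun q => Z T q.1 q.2 ω) ∂P) atTop
        (nhds (∫ ω, g (fun q => W q.1 ω) ∂P')) := by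
  classical
  set j0 : Fin m := ⟨0, hm⟩ with hj0
  have hφm : ∀ (T : ℝ) (j : Fin m), Measurable (fun ω => fun i => Z T i j ω) :=
    fun T j => measurable_pi_lambda _ (fun i => hmeasZ T i j)
  have hψm : Measurable (fun ω => fun i => W i ω) :=
    measurable_pi_lambda _ (fun i => hmeasW i)
  set ν : Measure (Fin p → ℝ) := P'.map (fun ω i => W i ω) with hν_def
  haveI : IsProbabilityMeasure ν := Measure.isProbabilityMeasure_map hψm.aemeasurable
  have keyA : ∀ (j : Fin m) (S : Set (Fin p → ℝ)), MeasurableSet S → ν (frontier S) = 0 →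
      Tendsto (fun T => P ((fun ω i => Z T i j ω) ⁻¹' S)) atTop (𝓝 (ν S)) := by
    intro j S hSm hS
    exact aux_tendsto_measure P P' (fun T ω i => Z T i j ω) (fun ω i => W i ω)
      (fun T => hφm T j) hψm (hconv j) hSm hS
  -- marginal laws
  haveI : ∀ i, IsProbabilityMeasure (P'.map (W i)) :=
    fun i => Measure.isProbabilityMeasure_map (hmeasW i).aemeasurable
  have hν_marg : ∀ (i : Fin p) (A : Set ℝ), MeasurableSet A →
      ν ((fun v : Fin p → ℝ => v i) ⁻¹' A) = P'.map (W i) A := by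
    intro i A hA
    rw [hν_def, Measure.map_apply hψm ((measurable_pi_apply i) hA),
      Measure.map_apply (hmeasW i) hA]
    rfl
  have hcdf : ∀ (i : Fin p) (j : Fin m) (x : ℝ), P'.map (W i) {x} = 0 →
      Tendsto (fun T => (P {ω | Z T i j ω ≤ x}).toReal) atTop
        (𝓝 ((P'.map (W i) (Iic x)).toReal)) := by
    intro i j x hx
    have hSm : MeasurableSet ((fun v : Fin p → ℝ => v i) ⁻¹' Iic x) :=
      (measurable_pi_apply i) measurableSet_Iic
    have hfr : ν (frontier ((fun v : Fin p → ℝ => v i) ⁻¹' Iic x)) = 0 := by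
      have hsub := Continuous.frontier_preimage_subset
        (f := fun v : Fin p → ℝ => v i) (continuous_apply i) (Iic x)
      rw [frontier_Iic] at hsub
      exact measure_mono_null hsub
        (by rw [hν_marg i {x} (measurableSet_singleton x)]; exact hx)
    have hkey := keyA j _ hSm hfr
    rw [hν_marg i (Iic x) measurableSet_Iic] at hkey
    have := (ENNReal.tendsto_toReal (measure_ne_top _ _)).comp hkey
    exact this
  -- convergence in probability of the column differences
  have step1 : ∀ (i : Fin p) (j : Fin m) {ε' δ' : ℝ}, 0 < ε' → 0 < δ' →
      ∀ᶠ T in atTop, (P {ω | ε' ≤ Z T i j0 ω - Z T i j ω}).toReal ≤ δ' := by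
    intro i j ε' δ' hε' hδ'
    exact aux_in_prob P (P'.map (W i)) (fun T ω => Z T i j0 ω) (fun T ω => Z T i j ω)
      (fun T => hmeasZ T i j0) (fun T => hmeasZ T i j) (hcdf i j0) (hcdf i j)
      (fun T => hdom T i j) hε' hδ'
  intro g
  -- step (a): the replicated first column converges
  set ϕrep : ContinuousMap (Fin p → ℝ) (Fin p × Fin m → ℝ) :=
    ⟨fun v q => v q.1, continuous_pi (fun q => continuous_apply q.1)⟩ with hϕrep
  have hRtend : Tendsto (fun T => ∫ ω, g (fun q => Z T q.1 j0 ω) ∂P) atTop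
      (𝓝 (∫ ω, g (fun q => W q.1 ω) ∂P')) := by
    have := hconv j0 (g.compContinuous ϕrep)
    exact this
  rw [Metric.tendsto_nhds]
  intro ε hε
  set G : ℝ := ‖g‖ + 1 with hG_def
  have hG : 0 < G := by have := norm_nonneg g; rw [hG_def]; linarith
  have hgG : ‖g‖ ≤ G := by rw [hG_def]; linarith
  set c : ℝ := ε/(32*G) with hc_def
  have hc : 0 < c := by positivity
  -- choose M
  obtain ⟨M, hM0, hMfr, hMtail⟩ : ∃ M : ℝ, 0 < M ∧
      ν (frontier ((Metric.closedBall (0 : Fin p → ℝ) M)ᶜ)) = 0 ∧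
      (ν ((Metric.closedBall (0 : Fin p → ℝ) M)ᶜ)).toReal < c := by
    obtain ⟨n₀, hn₀⟩ : ∃ n : ℕ, ν ((Metric.closedBall (0 : Fin p → ℝ) n)ᶜ) < ENNReal.ofReal c := by
      have hinter : (⋂ n : ℕ, (Metric.closedBall (0 : Fin p → ℝ) n)ᶜ) = ∅ := by
        ext v
        simp only [mem_iInter, mem_compl_iff, Metric.mem_closedBall, dist_zero_right,
          mem_empty_iff_false, iff_false, not_forall, not_not]
        obtain ⟨n, hn⟩ := exists_nat_gt ‖v‖
        exact ⟨n, hn.le⟩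
      have h1 := tendsto_measure_iInter_atTop (μ := ν)
        (s := fun n : ℕ => (Metric.closedBall (0 : Fin p → ℝ) n)ᶜ)
        (fun n : ℕ => (Metric.isClosed_closedBall.measurableSet.compl).nullMeasurableSet)
        (fun n k hnk => compl_subset_compl.mpr
          (Metric.closedBall_subset_closedBall (Nat.cast_le.mpr hnk)))
        ⟨0, measure_ne_top _ _⟩
      rw [hinter] at h1
      simp only [measure_empty] at h1
      exact (h1.eventually_lt_const (ENNReal.ofReal_pos.mpr hc)).exists
    -- choose M in (n₀, n₀+1) avoiding sphere atoms
    have hsph : Set.Countable {r : ℝ | ν (Metric.sphere (0 : Fin p → ℝ) r) ≠ 0} := by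
      have h := Measure.countable_meas_pos_of_disjoint_iUnion (μ := ν)
        (As := fun r : ℝ => Metric.sphere (0 : Fin p → ℝ) r)
        (fun r => Metric.isClosed_sphere.measurableSet)
        (fun r s hrs => by
          simp only [Function.onFun]
          apply Set.disjoint_left.mpr
          intro v hv hv'
          simp only [Metric.mem_sphere, dist_zero_right] at hv hv'
          exact hrs (hv.symm.trans hv'))
      convert h using 1
      ext r
      simp [pos_iff_ne_zero]
    obtain ⟨M, hMbad, hMmem⟩ :=
      (hsph.dense_compl ℝ).exists_mem_open isOpen_Ioo
        (nonempty_Ioo.mpr (by linarith [Nat.cast_nonneg (α := ℝ) n₀] : (n₀:ℝ) < n₀ + 1))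
    refine ⟨M, by have := hMmem.1; have := Nat.cast_nonneg (α := ℝ) n₀; linarith, ?_, ?_⟩
    · have hMne : M ≠ 0 := by
        have h1 := hMmem.1; have h2 := Nat.cast_nonneg (α := ℝ) n₀; intro h; rw [h] at h1; linarith
      rw [frontier_compl, frontier_closedBall _ hMne]
      by_contra hne
      exact hMbad hne
    · have hle : ν ((Metric.closedBall (0 : Fin p → ℝ) M)ᶜ) ≤
          ν ((Metric.closedBall (0 : Fin p → ℝ) n₀)ᶜ) :=
        measure_mono (compl_subset_compl.mpr
          (Metric.closedBall_subset_closedBall hMmem.1.le))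
      have := lt_of_le_of_lt hle hn₀
      rwa [ENNReal.lt_ofReal_iff_toReal_lt (measure_ne_top _ _)] at this
  -- eventual bound on leaving the ball
  have hBev : ∀ᶠ T in atTop,
      (P ((fun ω i => Z T i j0 ω) ⁻¹' (Metric.closedBall (0 : Fin p → ℝ) M)ᶜ)).toReal < c := by
    have hkey := keyA j0 _ (Metric.isClosed_closedBall.measurableSet.compl) hMfr
    have := (ENNReal.tendsto_toReal (measure_ne_top _ _)).comp hkey
    exact this.eventually_lt_const hMtail
  -- uniform continuity of g on the closed ball of radius M+1
  obtain ⟨δ₀, hδ₀, hUC⟩ : ∃ δ₀ > 0, ∀ x ∈ Metric.closedBall (0 : Fin p × Fin m → ℝ) (M+1),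
      ∀ y ∈ Metric.closedBall (0 : Fin p × Fin m → ℝ) (M+1),
      dist x y < δ₀ → dist (g x) (g y) < ε/8 := by
    have hK : IsCompact (Metric.closedBall (0 : Fin p × Fin m → ℝ) (M+1)) :=
      isCompact_closedBall _ _
    have := hK.uniformContinuousOn_of_continuous g.continuous.continuousOn
    rw [Metric.uniformContinuousOn_iff] at this
    obtain ⟨δ₀, hδ₀, him⟩ := this (ε/8) (by linarith)
    exact ⟨δ₀, hδ₀, fun x hx y hy hd => him x hx y hy hd⟩
  set δ' : ℝ := min δ₀ 1 / 2 with hδ'_def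
  have hδ'0 : 0 < δ' := by positivity
  have hδ'δ₀ : δ' < δ₀ := by
    have h1 : min δ₀ 1 ≤ δ₀ := min_le_left _ _
    rw [hδ'_def]; linarith
  have hδ'1 : δ' ≤ 1 := by
    have h1 : min δ₀ 1 ≤ 1 := min_le_right _ _
    rw [hδ'_def]; linarith
  set c' : ℝ := c / (p*m) with hc'_def
  have hpm : (0:ℝ) < (p:ℝ)*(m:ℝ) := by
    have := (Nat.cast_pos (α := ℝ)).mpr hp
    have := (Nat.cast_pos (α := ℝ)).mpr hm
    positivity
  have hc' : 0 < c' := by rw [hc'_def]; push_cast; positivity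
  have hpairEv : ∀ᶠ T in atTop, ∀ q : Fin p × Fin m,
      (P {ω | δ' ≤ Z T q.1 j0 ω - Z T q.1 q.2 ω}).toReal ≤ c' :=
    eventually_all.mpr (fun q => step1 q.1 q.2 hδ'0 hc')
  -- the bad set and the integral estimate
  have hbadmeas : ∀ T : ℝ, MeasurableSet
      (((fun ω i => Z T i j0 ω) ⁻¹' (Metric.closedBall (0 : Fin p → ℝ) M)ᶜ) ∪
        ⋃ q : Fin p × Fin m, {ω | δ' ≤ Z T q.1 j0 ω - Z T q.1 q.2 ω}) := by
    intro T
    refine MeasurableSet.union ((hφm T j0) Metric.isClosed_closedBall.measurableSet.compl) ?_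
    exact MeasurableSet.iUnion (fun q => measurableSet_le measurable_const
      ((hmeasZ T q.1 j0).sub (hmeasZ T q.1 q.2)))
  have hintg : ∀ (T : ℝ) (f : Ω → Fin p × Fin m → ℝ), Measurable f →
      Integrable (fun ω => g (f ω)) P := by
    intro T f hf
    refine Integrable.mono' (integrable_const ‖g‖)
      ((g.continuous.measurable.comp hf).aestronglyMeasurable) ?_
    exact ae_of_all _ (fun ω => g.norm_coe_le_norm _)
  have hkeyest : ∀ T : ℝ,
      dist (∫ ω, g (fun q => Z T q.1 q.2 ω) ∂P) (∫ ω, g (fun q => Z T q.1 j0 ω) ∂P) ≤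
        ε/8 + 2*‖g‖ * (P (((fun ω i => Z T i j0 ω) ⁻¹'
          (Metric.closedBall (0 : Fin p → ℝ) M)ᶜ) ∪
          ⋃ q : Fin p × Fin m, {ω | δ' ≤ Z T q.1 j0 ω - Z T q.1 q.2 ω})).toReal := by
    intro T
    set bad : Set Ω := ((fun ω i => Z T i j0 ω) ⁻¹' (Metric.closedBall (0 : Fin p → ℝ) M)ᶜ) ∪
      ⋃ q : Fin p × Fin m, {ω | δ' ≤ Z T q.1 j0 ω - Z T q.1 q.2 ω} with hbad_def
    have hMmeas : Measurable (fun ω => fun q : Fin p × Fin m => Z T q.1 q.2 ω) :=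
      measurable_pi_lambda _ (fun q => hmeasZ T q.1 q.2)
    have hRmeas : Measurable (fun ω => fun q : Fin p × Fin m => Z T q.1 j0 ω) :=
      measurable_pi_lambda _ (fun q => hmeasZ T q.1 j0)
    have hint1 := hintg T _ hMmeas
    have hint2 := hintg T _ hRmeas
    rw [dist_eq_norm, ← integral_sub hint1 hint2]
    have hptwise : ∀ᵐ ω ∂P, ‖g (fun q : Fin p × Fin m => Z T q.1 q.2 ω) -
        g (fun q : Fin p × Fin m => Z T q.1 j0 ω)‖ ≤
        ε/8 + bad.indicator (fun _ => 2*‖g‖) ω := by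
      have hdomae : ∀ᵐ ω ∂P, ∀ q : Fin p × Fin m, Z T q.1 q.2 ω ≤ Z T q.1 j0 ω :=
        ae_all_iff.mpr (fun q => hdom T q.1 q.2)
      filter_upwards [hdomae] with ω hω
      by_cases hb : ω ∈ bad
      · rw [indicator_of_mem hb]
        have h2 : dist (g (fun q : Fin p × Fin m => Z T q.1 q.2 ω))
            (g (fun q : Fin p × Fin m => Z T q.1 j0 ω)) ≤ 2*‖g‖ := by
          have := g.dist_le_two_norm (fun q : Fin p × Fin m => Z T q.1 q.2 ω)
            (fun q : Fin p × Fin m => Z T q.1 j0 ω)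
          linarith
        rw [← dist_eq_norm]
        linarith
      · rw [indicator_of_notMem hb]
        simp only [hbad_def, mem_union, mem_iUnion, not_or, not_exists, mem_preimage,
          mem_compl_iff, not_not, mem_setOf_eq, not_le] at hb
        obtain ⟨hball, hdiff⟩ := hb
        have hRnorm : ∀ i, |Z T i j0 ω| ≤ M := by
          intro i
          have h1 : ‖fun i => Z T i j0 ω‖ ≤ M := by
            rwa [← dist_zero_right]
          calc |Z T i j0 ω| ≤ ‖fun i' => Z T i' j0 ω‖ := by
                simpa using norm_le_pi_norm (fun i' => Z T i' j0 ω) i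
            _ ≤ M := h1
        have hRK : (fun q : Fin p × Fin m => Z T q.1 j0 ω) ∈
            Metric.closedBall (0 : Fin p × Fin m → ℝ) (M+1) := by
          rw [Metric.mem_closedBall, dist_zero_right]
          refine (pi_norm_le_iff_of_nonneg (by linarith)).mpr (fun q => ?_)
          calc ‖Z T q.1 j0 ω‖ = |Z T q.1 j0 ω| := rfl
            _ ≤ M := hRnorm q.1
            _ ≤ M + 1 := by linarith
        have hdist : dist (fun q : Fin p × Fin m => Z T q.1 q.2 ω)
            (fun q : Fin p × Fin m => Z T q.1 j0 ω) ≤ δ' := by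
          refine (dist_pi_le_iff hδ'0.le).mpr (fun q => ?_)
          rw [Real.dist_eq, abs_sub_comm, abs_of_nonneg (by linarith [hω q])]
          exact (hdiff q).le
        have hMK : (fun q : Fin p × Fin m => Z T q.1 q.2 ω) ∈
            Metric.closedBall (0 : Fin p × Fin m → ℝ) (M+1) := by
          rw [Metric.mem_closedBall]
          calc dist (fun q : Fin p × Fin m => Z T q.1 q.2 ω) 0 ≤
              dist (fun q : Fin p × Fin m => Z T q.1 q.2 ω)
                (fun q : Fin p × Fin m => Z T q.1 j0 ω) +
              dist (fun q : Fin p × Fin m => Z T q.1 j0 ω) 0 := dist_triangle _ _ _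
            _ ≤ δ' + M := by
                refine add_le_add hdist ?_
                rw [dist_zero_right]
                exact (pi_norm_le_iff_of_nonneg hM0.le).mpr (fun q => hRnorm q.1)
            _ ≤ M + 1 := by linarith
        have := hUC _ hMK _ hRK (lt_of_le_of_lt hdist hδ'δ₀)
        rw [← dist_eq_norm]
        linarith
    have hrhs_int : Integrable (fun ω => ε/8 + bad.indicator (fun _ => 2*‖g‖) ω) P := by
      refine (integrable_const (ε/8)).add ?_
      exact (integrable_const (2*‖g‖)).indicator (hbadmeas T)
    calc ‖∫ ω, (g (fun q : Fin p × Fin m => Z T q.1 q.2 ω) -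
          g (fun q : Fin p × Fin m => Z T q.1 j0 ω)) ∂P‖ ≤
        ∫ ω, (ε/8 + bad.indicator (fun _ => 2*‖g‖) ω) ∂P :=
          norm_integral_le_of_norm_le hrhs_int hptwise
      _ = ε/8 + 2*‖g‖ * (P bad).toReal := by
          rw [integral_add (integrable_const _)
            ((integrable_const (2*‖g‖)).indicator (hbadmeas T)),
            integral_const, integral_indicator_const _ (hbadmeas T)]
          simp only [Measure.real, measure_univ, ENNReal.toReal_one, one_smul, smul_eq_mul]
          rw [hbad_def]
          ring
  -- combine
  have hev2 : ∀ᶠ T in atTop,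
      dist (∫ ω, g (fun q => Z T q.1 q.2 ω) ∂P) (∫ ω, g (fun q => Z T q.1 j0 ω) ∂P) ≤ ε/4 := by
    filter_upwards [hBev, hpairEv] with T h1 h2
    refine (hkeyest T).trans ?_
    have hPbad : (P (((fun ω i => Z T i j0 ω) ⁻¹'
        (Metric.closedBall (0 : Fin p → ℝ) M)ᶜ) ∪
        ⋃ q : Fin p × Fin m, {ω | δ' ≤ Z T q.1 j0 ω - Z T q.1 q.2 ω})).toReal ≤ 2*c := by
      have hsum : P (((fun ω i => Z T i j0 ω) ⁻¹'
          (Metric.closedBall (0 : Fin p → ℝ) M)ᶜ) ∪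
          ⋃ q : Fin p × Fin m, {ω | δ' ≤ Z T q.1 j0 ω - Z T q.1 q.2 ω}) ≤
          P ((fun ω i => Z T i j0 ω) ⁻¹' (Metric.closedBall (0 : Fin p → ℝ) M)ᶜ) +
          ∑ q : Fin p × Fin m, P {ω | δ' ≤ Z T q.1 j0 ω - Z T q.1 q.2 ω} :=
        (measure_union_le _ _).trans (add_le_add le_rfl (measure_iUnion_fintype_le _ _))
      have hne : P ((fun ω i => Z T i j0 ω) ⁻¹' (Metric.closedBall (0 : Fin p → ℝ) M)ᶜ) +
          ∑ q : Fin p × Fin m, P {ω | δ' ≤ Z T q.1 j0 ω - Z T q.1 q.2 ω} ≠ ⊤ :=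
        ENNReal.add_ne_top.mpr ⟨measure_ne_top _ _,
          (ENNReal.sum_lt_top.mpr (fun q _ => measure_lt_top _ _)).ne⟩
      have := ENNReal.toReal_mono hne hsum
      rw [ENNReal.toReal_add (measure_ne_top _ _)
          (ENNReal.sum_lt_top.mpr (fun q _ => measure_lt_top _ _)).ne,
        ENNReal.toReal_sum (fun q _ => measure_ne_top _ _)] at this
      refine this.trans ?_
      have hsum2 : ∑ q : Fin p × Fin m,
          (P {ω | δ' ≤ Z T q.1 j0 ω - Z T q.1 q.2 ω}).toReal ≤
          ∑ _q : Fin p × Fin m, c' := Finset.sum_le_sum (fun q _ => h2 q)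
      rw [Finset.sum_const] at hsum2
      have hcard : (Finset.univ : Finset (Fin p × Fin m)).card = p * m := by simp
      rw [hcard] at hsum2
      have : (p*m : ℕ) • c' = c := by
        rw [nsmul_eq_mul, hc'_def]
        push_cast
        field_simp
      linarith [h1.le, hsum2, this ▸ hsum2]
    have h8 : 2*‖g‖ * (P (((fun ω i => Z T i j0 ω) ⁻¹'
        (Metric.closedBall (0 : Fin p → ℝ) M)ᶜ) ∪
        ⋃ q : Fin p × Fin m, {ω | δ' ≤ Z T q.1 j0 ω - Z T q.1 q.2 ω})).toReal ≤ ε/8 := by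
      have hnn : (0:ℝ) ≤ (P (((fun ω i => Z T i j0 ω) ⁻¹'
          (Metric.closedBall (0 : Fin p → ℝ) M)ᶜ) ∪
          ⋃ q : Fin p × Fin m, {ω | δ' ≤ Z T q.1 j0 ω - Z T q.1 q.2 ω})).toReal :=
        ENNReal.toReal_nonneg
      calc 2*‖g‖ * _ ≤ 2*G*(2*c) := by
            apply mul_le_mul (by linarith) hPbad hnn (by linarith)
        _ ≤ ε/8 := le_of_eq (by
            have hGne : G ≠ 0 := ne_of_gt hG
            rw [hc_def]
            field_simp
            ring)
    linarith
  have hev1 : ∀ᶠ T in atTop,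
      dist (∫ ω, g (fun q => Z T q.1 j0 ω) ∂P) (∫ ω, g (fun q => W q.1 ω) ∂P') < ε/2 := by
    have := Metric.tendsto_nhds.mp hRtend (ε/2) (by linarith)
    exact this
  filter_upwards [hev1, hev2] with T h1 h2
  calc dist (∫ ω, g (fun q => Z T q.1 q.2 ω) ∂P) (∫ ω, g (fun q => W q.1 ω) ∂P') ≤
      dist (∫ ω, g (fun q => Z T q.1 q.2 ω) ∂P) (∫ ω, g (fun q => Z T q.1 j0 ω) ∂P) +
      dist (∫ ω, g (fun q => Z T q.1 j0 ω) ∂P) (∫ ω, g (fun q => W q.1 ω) ∂P') :=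
        dist_triangle _ _ _
    _ < ε := by linarith

end AuxMain

end AuxLemmasForA4

/-- Lemma A.4: if each column of a random matrix converges in distribution to the same
random vector `W` and all columns are a.s. dominated by the first one, then the whole
matrix converges in distribution to `(W,…,W)`. -/

theorem dominated_columns_joint_convergence
    {Ω : Type*} [MeasurableSpace Ω] (P : Measure Ω) [IsProbabilityMeasure P]
    {Ω' : Type*} [MeasurableSpace Ω'] (P' : Measure Ω') [IsProbabilityMeasure P']
    {p m : ℕ} (hp : 0 < p) (hm : 0 < m)
    (Z : ℝ → Fin p → Fin m → Ω → ℝ) (W : Fin p → Ω' → ℝ)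
    (hmeasZ : ∀ T i j, Measurable (Z T i j)) (hmeasW : ∀ i, Measurable (W i))
    (hconv : ∀ j : Fin m, ∀ g : BoundedContinuousFunction (Fin p → ℝ) ℝ,
      Tendsto (fun T => ∫ ω, g (fun i => Z T i j ω) ∂P) atTop
        (nhds (∫ ω, g (fun i => W i ω) ∂P')))
    (hdom : ∀ (T : ℝ) (i : Fin p) (j : Fin m),
      ∀ᵐ ω ∂P, Z T i j ω ≤ Z T i ⟨0, hm⟩ ω) :
    ∀ g : BoundedContinuousFunction (Fin p × Fin m → ℝ) ℝ,
      Tendsto (fun T => ∫ ω, g (fun q => Z T q.1 q.2 ω) ∂P) atTop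
        (nhds (∫ ω, g (fun q => W q.1 ω) ∂P')) :=
  dominated_columns_joint_convergence' P P' hp hm Z W hmeasZ hmeasW hconv hdom
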